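/- Let G be a finite group, p a prime, and suppose G is not perfect, G is generated by its elements of order p, and a Sylow p-subgroup of G is cyclic of order p generated by an element a. If the derived subgroup G' is abelian, then conjugation by a acts on G' without nontrivial fixed points, i.e., for every x ∈ G' with x^a = x one has x = 1. -/

import Mathlib

theorem stmt_1 {G : Type} [Group G] [Finite G] {p : ℕ} (hp : p.Prime) (a : G)
    (ha : orderOf a = p)
    (hSyl : ∃ P : Sylow p G, (P : Subgroup G) = Subgroup.zpowers a)
    (hgen : Subgroup.closure {g : G | orderOf g = p} = ⊤)
    (hnperf : commutator G ≠ ⊤)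
    (hab : ∀ x ∈ commutator G, ∀ y ∈ commutator G, x * y = y * x) :
    ∀ x ∈ commutator G, a⁻¹ * x * a = x → x = 1 := by
  classical
  haveI : Fact p.Prime := ⟨hp⟩
  set N := commutator G with hN
  haveI hNnorm : N.Normal := by rw [hN]; infer_instance
  have hGpos : Nat.card G ≠ 0 := Nat.card_pos.ne'
  -- p-part of |G| is exactly 1
  obtain ⟨P, hP⟩ := hSyl
  have hfact : (Nat.card G).factorization p = 1 := by
    have h1 : Nat.card ↥(P : Subgroup G) = p := by rw [hP, Nat.card_zpowers, ha]
    have h2 := Sylow.card_eq_multiplicity P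
    rw [h1] at h2
    exact (Nat.pow_right_injective hp.two_le ((pow_one p).trans h2)).symm
  -- quotient commutes
  have hcommQ : ∀ x y : G ⧸ N, Commute x y := by
    intro x y
    induction x using QuotientGroup.induction_on with
    | H g =>
    induction y using QuotientGroup.induction_on with
    | H h =>
    rw [← commutatorElement_eq_one_iff_commute]
    open scoped commutatorElement in
    have : ⁅(g : G ⧸ N), (h : G ⧸ N)⁆ = ((⁅g, h⁆ : G) : G ⧸ N) := by
      simp [commutatorElement_def]
    rw [this, QuotientGroup.eq_one_iff]
    exact Subgroup.commutator_mem_commutator (Subgroup.mem_top g) (Subgroup.mem_top h)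
  -- exponent p quotient
  have hQp : ∀ q : G ⧸ N, q ^ p = 1 := by
    intro q
    induction q using QuotientGroup.induction_on with
    | H g =>
    have hg : g ∈ Subgroup.closure {g : G | orderOf g = p} := by rw [hgen]; trivial
    refine Subgroup.closure_induction (fun x hx => ?_) ?_ ?_ ?_ hg
    · show ((x : G ⧸ N)) ^ p = 1
      have : ((x : G ⧸ N)) ^ p = ((x ^ p : G) : G ⧸ N) := by
        simp [QuotientGroup.mk_pow]
      rw [this, ← hx, pow_orderOf_eq_one, QuotientGroup.mk_one]
    · simp
    · intro x y _ _ hx hy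
      have : ((x * y : G) : G ⧸ N) = (x : G ⧸ N) * (y : G ⧸ N) := rfl
      rw [this, (hcommQ (x : G ⧸ N) (y : G ⧸ N)).mul_pow, hx, hy, one_mul]
    · intro x _ hx
      have : ((x⁻¹ : G) : G ⧸ N) = ((x : G ⧸ N))⁻¹ := rfl
      rw [this, inv_pow, hx, inv_one]
  -- the quotient has card p
  have hpgroup : IsPGroup p (G ⧸ N) := fun q => ⟨1, by rw [pow_one]; exact hQp q⟩
  have hdvdQ : Nat.card (G ⧸ N) ∣ Nat.card G :=
    ⟨Nat.card ↥N, Subgroup.card_eq_card_quotient_mul_card_subgroup N⟩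
  have hcardQ : Nat.card (G ⧸ N) = p := by
    obtain ⟨n, hn⟩ := IsPGroup.iff_card.mp hpgroup
    have hle : n ≤ 1 := by
      rw [hn] at hdvdQ
      have := (hp.pow_dvd_iff_le_factorization hGpos).mp hdvdQ
      omega
    have hne : n ≠ 0 := by
      intro h0
      rw [h0, pow_zero] at hn
      haveI := (Nat.card_eq_one_iff_unique.mp hn).1
      apply hnperf
      rw [eq_top_iff]
      intro g _
      rw [← QuotientGroup.eq_one_iff (N := N) g]
      exact Subsingleton.elim _ _
    have : n = 1 := by omega
    rw [this, pow_one] at hn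
    exact hn
  -- p does not divide card N
  have hpN : ¬ (p ∣ Nat.card ↥N) := by
    intro hdvd
    have h2 : p ^ 2 ∣ Nat.card G := by
      rw [Subgroup.card_eq_card_quotient_mul_card_subgroup N, hcardQ, pow_two]
      exact mul_dvd_mul_left p hdvd
    have := (hp.pow_dvd_iff_le_factorization hGpos).mp h2
    omega
  -- a is not in N
  have haN : a ∉ N := by
    intro hmem
    apply hpN
    have : orderOf (⟨a, hmem⟩ : ↥N) = p := by
      rw [Subgroup.orderOf_mk, ha]
    calc p = orderOf (⟨a, hmem⟩ : ↥N) := this.symm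
    _ ∣ Nat.card ↥N := orderOf_dvd_natCard _
  -- every element decomposes as m * a ^ i with m ∈ N
  have hdecomp : ∀ g : G, ∃ m ∈ N, ∃ i : ℤ, g = m * a ^ i := by
    have hma : ((a : G ⧸ N)) ≠ 1 := by
      rw [Ne, QuotientGroup.eq_one_iff]; exact haN
    have horder : orderOf ((a : G ⧸ N)) = p := by
      have hdvd : orderOf ((a : G ⧸ N)) ∣ p := hcardQ ▸ orderOf_dvd_natCard _
      rcases (Nat.Prime.eq_one_or_self_of_dvd hp _ hdvd) with h | h
      · exact absurd (orderOf_eq_one_iff.mp h) hma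
      · exact h
    have htop : Subgroup.zpowers ((a : G ⧸ N)) = ⊤ :=
      Subgroup.eq_top_of_card_eq _ (by rw [Nat.card_zpowers, horder, hcardQ])
    intro g
    have : (g : G ⧸ N) ∈ Subgroup.zpowers ((a : G ⧸ N)) := htop ▸ Subgroup.mem_top _
    obtain ⟨i, hi⟩ := this
    have hi' : ((a ^ i : G) : G ⧸ N) = (g : G ⧸ N) := by
      rw [← hi]; simp
    have hmem : (a ^ i)⁻¹ * g ∈ N := QuotientGroup.eq.mp hi'
    refine ⟨a ^ i * ((a ^ i)⁻¹ * g) * (a ^ i)⁻¹, hNnorm.conj_mem _ hmem _, i, by group⟩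
  -- N is commutative
  letI cN : CommGroup ↥N :=
    { (inferInstance : Group ↥N) with
      mul_comm := fun x y => Subtype.ext (hab x x.2 y y.2) }
  -- conjugation stabilizes N
  have hφmem : ∀ x : G, x ∈ N → a⁻¹ * x * a ∈ N := by
    intro x hx
    have := hNnorm.conj_mem x hx a⁻¹
    simpa using this
  -- the endomorphism x ↦ (a⁻¹ x a) * x⁻¹ of N
  let φN : ↥N →* ↥N :=
    ((MulAut.conj a⁻¹).toMonoidHom.domRestrict N).codRestrict N
      (fun x => by simpa using hφmem x x.2)
  let F : ↥N →* ↥N := φN * (MonoidHom.id ↥N)⁻¹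
  have hF : ∀ x : ↥N, (F x : G) = a⁻¹ * x * a * (x : G)⁻¹ := by
    intro x
    show ((φN x : G) * ((x : ↥N)⁻¹ : ↥N) : G) = _
    have : (φN x : G) = a⁻¹ * x * a := by
      show a⁻¹ * (x : G) * a⁻¹⁻¹ = a⁻¹ * x * a
      rw [inv_inv]
    rw [this]
    rfl
  let K : Subgroup G := F.range.map N.subtype
  have hKN : K ≤ N := Subgroup.map_subtype_le _
  have hmemK : ∀ x : ↥N, a⁻¹ * (x : G) * a * (x : G)⁻¹ ∈ K :=
    fun x => ⟨F x, ⟨x, rfl⟩, hF x⟩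
  have hKform : ∀ k ∈ K, ∃ x : ↥N, k = a⁻¹ * (x : G) * a * (x : G)⁻¹ := by
    intro k hk
    obtain ⟨y, ⟨x, hx⟩, hyk⟩ := hk
    exact ⟨x, by rw [← hyk, ← hx]; exact hF x⟩
  -- conjugation by a preserves K both ways
  have hconj1 : ∀ k ∈ K, a * k * a⁻¹ ∈ K := by
    intro k hk
    obtain ⟨x, rfl⟩ := hKform k hk
    have := hmemK ⟨a * x * a⁻¹, hNnorm.conj_mem x x.2 a⟩
    simp only [Subgroup.coe_mk] at this ⊢
    convert this using 1
    group
  have hconj2 : ∀ k ∈ K, a⁻¹ * k * a ∈ K := by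
    intro k hk
    obtain ⟨x, rfl⟩ := hKform k hk
    have := hmemK ⟨a⁻¹ * x * a, hφmem x x.2⟩
    simp only [Subgroup.coe_mk] at this ⊢
    convert this using 1
    group
  -- K is normal
  haveI hKnormal : K.Normal := by
    rw [← Subgroup.normalizer_eq_top_iff]
    rw [eq_top_iff]
    intro g _
    obtain ⟨m, hm, i, rfl⟩ := hdecomp g
    have hanorm : a ∈ Subgroup.normalizer (K : Set G) := by
      rw [Subgroup.mem_normalizer_iff]
      intro h
      constructor
      · exact fun hh => hconj1 h hh
      · intro hh
        have := hconj2 _ hh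
        have heq : a⁻¹ * (a * h * a⁻¹) * a = h := by group
        rwa [heq] at this
    have hmnorm : m ∈ Subgroup.normalizer (K : Set G) := by
      rw [Subgroup.mem_normalizer_iff]
      intro h
      constructor
      · intro hh
        have : m * h = h * m := hab m hm h (hKN hh)
        rw [show m * h * m⁻¹ = h by rw [this]; group]
        exact hh
      · intro hh
        have hhN : h ∈ N := by
          have := hKN hh
          have heq : m⁻¹ * (m * h * m⁻¹) * m = h := by group
          rw [← heq]
          exact N.mul_mem (N.mul_mem (N.inv_mem hm) this) hm
        have : m * h = h * m := hab m hm h hhN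
        rwa [show m * h * m⁻¹ = h by rw [this]; group] at hh
    exact (Subgroup.normalizer (K : Set G)).mul_mem hmnorm (zpow_mem hanorm i)
  -- commutators of a with N lie in K
  have hKa : ∀ n ∈ N, n * a * n⁻¹ * a⁻¹ ∈ K := by
    intro n hn
    have := hmemK ⟨a * n * a⁻¹, hNnorm.conj_mem n hn a⟩
    simp only [Subgroup.coe_mk] at this
    convert this using 1
    group
  -- N = commutator ≤ K since G/K is abelian
  have hNleK : N ≤ K := by
    rw [hN, commutator_def, Subgroup.commutator_le]
    intro g _ h _
    open scoped commutatorElement in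
    rw [← QuotientGroup.eq_one_iff (N := K) ⁅g, h⁆]
    rw [show ((⁅g, h⁆ : G) : G ⧸ K) = ⁅(g : G ⧸ K), (h : G ⧸ K)⁆ by
      simp [commutatorElement_def]]
    rw [commutatorElement_eq_one_iff_commute]
    obtain ⟨m, hm, i, rfl⟩ := hdecomp g
    obtain ⟨n, hn, j, rfl⟩ := hdecomp h
    have cA : ∀ x ∈ N, Commute ((x : G) : G ⧸ K) ((a : G ⧸ K)) := by
      intro x hx
      rw [← commutatorElement_eq_one_iff_commute]
      rw [show ⁅((x : G) : G ⧸ K), (a : G ⧸ K)⁆ = ((⁅x, a⁆ : G) : G ⧸ K) by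
        simp [commutatorElement_def]]
      rw [QuotientGroup.eq_one_iff]
      exact hKa x hx
    have cNN : ∀ x ∈ N, ∀ y ∈ N, Commute ((x : G) : G ⧸ K) ((y : G) : G ⧸ K) := by
      intro x hx y hy
      have : ((x * y : G) : G ⧸ K) = ((y * x : G) : G ⧸ K) := by rw [hab x hx y hy]
      exact this
    have e1 : ((m * a ^ i : G) : G ⧸ K) = ((m : G) : G ⧸ K) * ((a : G) : G ⧸ K) ^ i := by
      simp
    have e2 : ((n * a ^ j : G) : G ⧸ K) = ((n : G) : G ⧸ K) * ((a : G) : G ⧸ K) ^ j := by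
      simp
    rw [e1, e2]
    have h1 : Commute (((m : G) : G ⧸ K) * ((a : G) : G ⧸ K) ^ i) ((n : G) : G ⧸ K) :=
      Commute.mul_left (cNN m hm n hn) ((cA n hn).symm.zpow_left i)
    have h2 : Commute (((m : G) : G ⧸ K) * ((a : G) : G ⧸ K) ^ i) (((a : G) : G ⧸ K) ^ j) :=
      Commute.mul_left ((cA m hm).zpow_right j) ((Commute.refl _).zpow_zpow i j)
    exact Commute.mul_right h1 h2
  -- hence F is surjective, hence injective
  have hFrange : F.range = ⊤ := by
    have h1 : F.range.map N.subtype = (⊤ : Subgroup ↥N).map N.subtype := by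
      rw [← MonoidHom.range_eq_map, Subgroup.range_subtype]
      exact le_antisymm hKN hNleK
    exact Subgroup.map_injective N.subtype_injective h1
  have hFsurj : Function.Surjective F := MonoidHom.range_eq_top.mp hFrange
  have hFinj : Function.Injective F := Finite.injective_iff_surjective.mpr hFsurj
  -- conclude
  intro x hx hfix
  have h1 : F ⟨x, hx⟩ = 1 := by
    apply Subtype.ext
    rw [hF]
    show a⁻¹ * x * a * x⁻¹ = (1 : G)
    rw [hfix, mul_inv_cancel]
  have h2 : (⟨x, hx⟩ : ↥N) = 1 := hFinj (h1.trans (map_one F).symm)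
  exact congrArg Subtype.val h2
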